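/- Let k be a field, E a finite set, and let P be an E×H matrix and Q an E×W matrix over k with |H| + |W| = |E|, such that P has rank |H|, Q has rank |W|, and Pᵀ·Q = 0 (the columns of Q are orthogonal to the columns of P for the standard bilinear form on k^E). Then there exists a nonzero constant c ∈ k such that for every family of units a : E → kˣ, det(Pᵀ · diag(a) · P) = c · (∏_{e ∈ E} a_e) · det(Qᵀ · diag(a⁻¹) · Q), where diag(a) is the E×E diagonal matrix with entries a_e and diag(a⁻¹) has entries a_e⁻¹. (Lemma 2.1: duality between Ψ and Ψ^∨.) -/

import Mathlib

open Matrix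

private lemma exists_invertible_submatrix {k : Type} [Field k] {E H : Type}
    [Fintype E] [DecidableEq E] [Fintype H] [DecidableEq H]
    (P : Matrix E H k) (hrankP : P.rank = Fintype.card H) :
    ∃ g : H → E, Function.Injective g ∧ IsUnit (P.submatrix g id) := by
  classical
  have hspan : Submodule.span k (Set.range P) = ⊤ := by
    apply Submodule.eq_top_of_finrank_eq
    change Module.finrank k (Submodule.span k (Set.range P.row)) = _
    rw [← Matrix.rank_eq_finrank_span_row, hrankP, Module.finrank_fintype_fun_eq_card]
  obtain ⟨t, hts, htspan, htind⟩ := exists_linearIndependent k (Set.range P)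
  have htfin : t.Finite := htind.setFinite
  haveI : Fintype t := htfin.fintype
  have hcard_t : Fintype.card t = Fintype.card H := by
    have h1 := linearIndependent_iff_card_eq_finrank_span.mp htind
    rw [Subtype.range_coe, Set.finrank, htspan, hspan, finrank_top,
      Module.finrank_fintype_fun_eq_card] at h1
    exact h1
  let eqv : H ≃ t := Fintype.equivOfCardEq hcard_t.symm
  have hpre : ∀ x : t, ∃ e : E, P e = (x : H → k) := fun x => hts x.2
  choose f hf using hpre
  refine ⟨fun h => f (eqv h), ?_, ?_⟩
  · intro h1 h2 hh
    have : (eqv h1 : H → k) = (eqv h2 : H → k) := by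
      rw [← hf (eqv h1), ← hf (eqv h2)]; exact congrArg P hh
    exact eqv.injective (Subtype.coe_injective this)
  · rw [← Matrix.linearIndependent_rows_iff_isUnit]
    have : (fun i => (P.submatrix (fun h => f (eqv h)) id) i)
        = (fun x : t => (x : H → k)) ∘ eqv := by
      funext i; exact hf (eqv i)
    change LinearIndependent k (fun i => (P.submatrix (fun h => f (eqv h)) id) i)
    rw [this]
    exact htind.comp eqv eqv.injective

/-- Conjugating a diagonal matrix, after reindexing the big index set. -/
private lemma reindex_conj {k : Type} [CommRing k] {E X Y : Type} [Fintype E] [DecidableEq E]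
    [Fintype X] [Fintype Y] [DecidableEq Y] (M : Matrix E X k) (d : E → k) (e : E ≃ Y) :
    Mᵀ * Matrix.diagonal d * M
      = (M.submatrix e.symm id)ᵀ * Matrix.diagonal (d ∘ e.symm) * (M.submatrix e.symm id) := by
  rw [transpose_submatrix, ← Matrix.submatrix_diagonal_equiv d e.symm,
    Matrix.submatrix_mul_equiv Mᵀ (Matrix.diagonal d) id e.symm _,
    Matrix.submatrix_mul_equiv _ M id e.symm id, Matrix.submatrix_id_id]

private lemma blocks_conj {k : Type} [CommRing k] {H W X : Type}
    [Fintype H] [DecidableEq H] [Fintype W] [DecidableEq W] [Fintype X]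
    (A : Matrix H X k) (B : Matrix W X k) (d1 : H → k) (d2 : W → k) :
    (fromRows A B)ᵀ * Matrix.diagonal (Sum.elim d1 d2) * fromRows A B
      = Aᵀ * Matrix.diagonal d1 * A + Bᵀ * Matrix.diagonal d2 * B := by
  rw [transpose_fromRows, ← Matrix.fromBlocks_diagonal, fromCols_mul_fromBlocks,
    Matrix.mul_zero, Matrix.mul_zero, add_zero, zero_add, fromCols_mul_fromRows]

open Matrix in
theorem psi_dual_psi_duality {k : Type} [Field k] {E H W : Type}
    [Fintype E] [DecidableEq E] [Fintype H] [DecidableEq H] [Fintype W] [DecidableEq W]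
    (P : Matrix E H k) (Q : Matrix E W k)
    (hcard : Fintype.card H + Fintype.card W = Fintype.card E)
    (hrankP : P.rank = Fintype.card H)
    (hrankQ : Q.rank = Fintype.card W)
    (hPQ : Pᵀ * Q = 0) :
    ∃ c : k, c ≠ 0 ∧
      ∀ a : E → kˣ,
        (Pᵀ * Matrix.diagonal (fun e => (a e : k)) * P).det =
          c * (∏ e : E, (a e : k)) *
            (Qᵀ * Matrix.diagonal (fun e => (((a e)⁻¹ : kˣ) : k)) * Q).det := by
  classical
  obtain ⟨g, hginj, hAunit0⟩ := exists_invertible_submatrix P hrankP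
  -- injectivity of `Q.mulVec`
  have hQker : ∀ v : W → k, Q *ᵥ v = 0 → v = 0 := by
    have h := LinearMap.finrank_range_add_finrank_ker Q.mulVecLin
    rw [Module.finrank_fintype_fun_eq_card] at h
    have hrk : Module.finrank k (LinearMap.range Q.mulVecLin) = Fintype.card W := hrankQ
    have hker0 : Module.finrank k (LinearMap.ker Q.mulVecLin) = 0 := by omega
    have hker : LinearMap.ker Q.mulVecLin = ⊥ := Submodule.finrank_eq_zero.mp hker0
    intro v hv
    have hv' : v ∈ LinearMap.ker Q.mulVecLin := by
      simpa [Matrix.mulVecLin_apply] using hv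
    rw [hker] at hv'
    simpa using hv'
  -- the reindexing equivalence
  set s : Set E := Set.range g with hs
  have hcardW : Fintype.card {x : E // ¬ x ∈ s} = Fintype.card W := by
    have h1 : Fintype.card {x : E // x ∈ s} = Fintype.card H := by
      rw [Fintype.card_congr (Equiv.ofInjective g hginj).symm]
    have h2 := Fintype.card_subtype_compl (fun x : E => x ∈ s)
    omega
  let e : E ≃ H ⊕ W :=
    (Equiv.sumCompl (· ∈ s)).symm.trans
      (Equiv.sumCongr (Equiv.ofInjective g hginj).symm (Fintype.equivOfCardEq hcardW))
  have he : ∀ h : H, e.symm (Sum.inl h) = g h := by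
    intro h
    show (Equiv.sumCompl (· ∈ s)) ((Equiv.sumCongr (Equiv.ofInjective g hginj).symm
      (Fintype.equivOfCardEq hcardW)).symm (Sum.inl h)) = g h
    simp
  -- block pieces
  set A : Matrix H H k := P.submatrix (fun h => e.symm (Sum.inl h)) id with hA
  set B : Matrix W H k := P.submatrix (fun w => e.symm (Sum.inr w)) id with hBdef
  set Q1 : Matrix H W k := Q.submatrix (fun h => e.symm (Sum.inl h)) id with hQ1def
  set Q2 : Matrix W W k := Q.submatrix (fun w => e.symm (Sum.inr w)) id with hQ2def
  have hAunit : IsUnit A := by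
    have : A = P.submatrix g id := by
      ext i j
      show P (e.symm (Sum.inl i)) j = P (g i) j
      rw [he i]
    rwa [this]
  have hAdet : IsUnit A.det := (Matrix.isUnit_iff_isUnit_det A).mp hAunit
  have hPblock : P.submatrix (⇑e.symm) id = fromRows A B := by
    ext (i | i) j <;> rfl
  have hQblock : Q.submatrix (⇑e.symm) id = fromRows Q1 Q2 := by
    ext (i | i) j <;> rfl
  -- the matrix X
  set X : Matrix W H k := B * A⁻¹ with hXdef
  have hB : B = X * A := by
    rw [hXdef, Matrix.mul_assoc, Matrix.nonsing_inv_mul A hAdet, Matrix.mul_one]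
  -- block form of the orthogonality relation
  have hblock0 : Aᵀ * Q1 + Bᵀ * Q2 = 0 := by
    have h1 : Pᵀ * Q = (P.submatrix (⇑e.symm) id)ᵀ * (Q.submatrix (⇑e.symm) id) := by
      rw [transpose_submatrix, Matrix.submatrix_mul_equiv Pᵀ Q id e.symm id,
        Matrix.submatrix_id_id]
    rw [h1, hPblock, hQblock, transpose_fromRows, fromCols_mul_fromRows] at hPQ
    exact hPQ
  have hQ1eq : Q1 = -(Xᵀ * Q2) := by
    have hAt : IsUnit Aᵀ.det := by rwa [Matrix.det_transpose]
    have h1 : Aᵀ * Q1 = Aᵀ * (-(Xᵀ * Q2)) := by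
      rw [Matrix.mul_neg, ← Matrix.mul_assoc, ← Matrix.transpose_mul, ← hB]
      exact eq_neg_of_add_eq_zero_left hblock0
    calc Q1 = (Aᵀ)⁻¹ * (Aᵀ * Q1) := by
          rw [← Matrix.mul_assoc, Matrix.nonsing_inv_mul _ hAt, Matrix.one_mul]
      _ = (Aᵀ)⁻¹ * (Aᵀ * (-(Xᵀ * Q2))) := by rw [h1]
      _ = -(Xᵀ * Q2) := by
          rw [← Matrix.mul_assoc, Matrix.nonsing_inv_mul _ hAt, Matrix.one_mul]
  -- Q2 is invertible
  have hQ2unit : IsUnit Q2 := by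
    rw [← Matrix.mulVec_injective_iff_isUnit]
    intro v w hvw
    have hsub : Q2 *ᵥ (v - w) = 0 := by
      rw [Matrix.mulVec_sub, hvw, sub_self]
    have h0 : (Q.submatrix (⇑e.symm) id) *ᵥ (v - w) = 0 := by
      rw [hQblock, fromRows_mulVec, hQ1eq]
      have : Q1 *ᵥ (v - w) = 0 := by
        rw [hQ1eq, Matrix.neg_mulVec, ← Matrix.mulVec_mulVec, hsub, Matrix.mulVec_zero, neg_zero]
      rw [hQ1eq] at this
      rw [this, hsub]
      ext (i | i) <;> rfl
    have hQ0 : Q *ᵥ (v - w) = 0 := by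
      funext x
      have h2 := congrFun h0 (e x)
      have h3 : (Q.submatrix (⇑e.symm) id) *ᵥ (v - w)
          = (Q *ᵥ (v - w)) ∘ ⇑e.symm := by
        have := Matrix.submatrix_mulVec_equiv Q (v - w) (⇑e.symm) (Equiv.refl W)
        simpa using this
      rw [h3] at h2
      simpa using h2
    have := hQker _ hQ0
    exact sub_eq_zero.mp this
  have hQ2det : IsUnit Q2.det := (Matrix.isUnit_iff_isUnit_det Q2).mp hQ2unit
  have hAdet_ne : A.det ≠ 0 := hAdet.ne_zero
  have hQ2det_ne : Q2.det ≠ 0 := hQ2det.ne_zero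
  refine ⟨A.det ^ 2 * (Q2.det ^ 2)⁻¹, ?_, ?_⟩
  · exact mul_ne_zero (pow_ne_zero _ hAdet_ne) (inv_ne_zero (pow_ne_zero _ hQ2det_ne))
  intro a
  set d1 : H → k := fun i => ((a (e.symm (Sum.inl i))) : k) with hd1
  set d2 : W → k := fun i => ((a (e.symm (Sum.inr i))) : k) with hd2
  set d1' : H → k := fun i => (((a (e.symm (Sum.inl i)))⁻¹ : kˣ) : k) with hd1'
  set d2' : W → k := fun i => (((a (e.symm (Sum.inr i)))⁻¹ : kˣ) : k) with hd2'
  have hdelim : (fun x => ((a x) : k)) ∘ ⇑e.symm = Sum.elim d1 d2 := by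
    funext i; cases i <;> rfl
  have hdelim' : (fun x => (((a x)⁻¹ : kˣ) : k)) ∘ ⇑e.symm = Sum.elim d1' d2' := by
    funext i; cases i <;> rfl
  have h11 : Matrix.diagonal d1 * Matrix.diagonal d1' = 1 := by
    rw [Matrix.diagonal_mul_diagonal]
    have h : (fun i => d1 i * d1' i) = fun _ => (1 : k) := funext fun i => Units.mul_inv _
    rw [h, Matrix.diagonal_one]
  have h22 : Matrix.diagonal d2 * Matrix.diagonal d2' = 1 := by
    rw [Matrix.diagonal_mul_diagonal]
    have h : (fun i => d2 i * d2' i) = fun _ => (1 : k) := funext fun i => Units.mul_inv _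
    rw [h, Matrix.diagonal_one]
  -- LHS in block form
  have hLHS : (Pᵀ * Matrix.diagonal (fun x => ((a x) : k)) * P).det
      = A.det ^ 2 * (Matrix.diagonal d1 + Xᵀ * Matrix.diagonal d2 * X).det := by
    rw [reindex_conj P _ e, hdelim, hPblock, blocks_conj]
    have hstep : Aᵀ * Matrix.diagonal d1 * A + Bᵀ * Matrix.diagonal d2 * B
        = Aᵀ * (Matrix.diagonal d1 + Xᵀ * Matrix.diagonal d2 * X) * A := by
      rw [hB]
      simp only [Matrix.transpose_mul, Matrix.mul_add, Matrix.add_mul, Matrix.mul_assoc]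
    rw [hstep, Matrix.det_mul, Matrix.det_mul, Matrix.det_transpose]
    ring
  -- RHS in block form
  have hRHS : (Qᵀ * Matrix.diagonal (fun x => (((a x)⁻¹ : kˣ) : k)) * Q).det
      = Q2.det ^ 2 * (X * Matrix.diagonal d1' * Xᵀ + Matrix.diagonal d2').det := by
    rw [reindex_conj Q _ e, hdelim', hQblock, blocks_conj]
    have hstep : Q1ᵀ * Matrix.diagonal d1' * Q1 + Q2ᵀ * Matrix.diagonal d2' * Q2
        = Q2ᵀ * (X * Matrix.diagonal d1' * Xᵀ + Matrix.diagonal d2') * Q2 := by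
      rw [hQ1eq]
      simp only [Matrix.transpose_neg, Matrix.transpose_mul, Matrix.transpose_transpose,
        Matrix.neg_mul, Matrix.mul_neg, neg_neg, Matrix.mul_add, Matrix.add_mul,
        Matrix.mul_assoc]
    rw [hstep, Matrix.det_mul, Matrix.det_mul, Matrix.det_transpose]
    ring
  -- core identity
  have hcore : (Matrix.diagonal d1 + Xᵀ * Matrix.diagonal d2 * X).det
      = (∏ i, d1 i) * (∏ i, d2 i) * (X * Matrix.diagonal d1' * Xᵀ + Matrix.diagonal d2').det := by
    have hfact : Matrix.diagonal d1 + Xᵀ * Matrix.diagonal d2 * X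
        = Matrix.diagonal d1
            * (1 + (Matrix.diagonal d1' * Xᵀ) * (Matrix.diagonal d2 * X)) := by
      rw [Matrix.mul_add, Matrix.mul_one]
      congr 1
      simp only [← Matrix.mul_assoc]
      rw [h11, Matrix.one_mul]
    have hfact2 : (1 : Matrix W W k) + (Matrix.diagonal d2 * X) * (Matrix.diagonal d1' * Xᵀ)
        = Matrix.diagonal d2 * (X * Matrix.diagonal d1' * Xᵀ + Matrix.diagonal d2') := by
      rw [Matrix.mul_add, h22, add_comm]
      simp only [Matrix.mul_assoc]
    rw [hfact, Matrix.det_mul, Matrix.det_one_add_mul_comm, hfact2, Matrix.det_mul,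
      Matrix.det_diagonal, Matrix.det_diagonal]
    ring
  -- product splitting
  have hprod : (∏ x : E, ((a x) : k)) = (∏ i, d1 i) * (∏ i, d2 i) := by
    have h1 : (∏ y : H ⊕ W, Sum.elim d1 d2 y) = ∏ x : E, ((a x) : k) :=
      Fintype.prod_equiv e.symm (fun y => Sum.elim d1 d2 y) (fun x => ((a x) : k))
        (fun y => by cases y <;> rfl)
    rw [← h1, Fintype.prod_sum_type]
    simp
  rw [hLHS, hRHS, hcore, hprod]
  field_simp
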